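/- L² norm of the type I exceptional Laguerre polynomials: for k > 0, m ≥ 0, and n ≥ m, ∫_0^∞ (L^I_{k,n,m}(x))² · x^k·e^{-x}/ξ_{k-1,m}(x)² dx = (k+n)·Γ(k+n-m)/(n-m)!. -/

import Mathlib

noncomputable def lag (n : ℕ) (k : ℝ) (x : ℝ) : ℝ :=
  ∑ i ∈ Finset.range (n + 1),
    (-1 : ℝ) ^ i * (∏ j ∈ Finset.range (n - i), (k + (i : ℝ) + 1 + (j : ℝ))) /
      (Nat.factorial (n - i) : ℝ) * x ^ i / (Nat.factorial i : ℝ)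

noncomputable def xi (k : ℝ) (m : ℕ) (x : ℝ) : ℝ := lag m k (-x)

noncomputable def lagZ (j : ℤ) (k : ℝ) (x : ℝ) : ℝ :=
  if 0 ≤ j then lag j.toNat k x else 0

open MeasureTheory

noncomputable def Pr (a : ℝ) (t : ℕ) : ℝ := ∏ j ∈ Finset.range t, (a + j)

noncomputable def lc (n i : ℕ) (k : ℝ) : ℝ :=
  (-1) ^ i * Pr (k + i + 1) (n - i) / (Nat.factorial (n - i) : ℝ) / (Nat.factorial i : ℝ)

lemma Pr_succ (a : ℝ) (t : ℕ) : Pr a (t+1) = Pr a t * (a + t) := Finset.prod_range_succ _ _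

lemma Pr_succ' (a : ℝ) (t : ℕ) : Pr a (t+1) = a * Pr (a+1) t := by
  rw [Pr, Finset.prod_range_succ']
  simp only [Nat.cast_zero, add_zero, Pr]
  rw [mul_comm]
  congr 1
  refine Finset.prod_congr rfl fun j _ => by push_cast; ring

lemma lag_eq (n : ℕ) (k x : ℝ) :
    lag n k x = ∑ i ∈ Finset.range (n+1), lc n i k * x ^ i := by
  refine Finset.sum_congr rfl fun i _ => ?_
  rw [lc, Pr]
  have : ∏ j ∈ Finset.range (n - i), ((k + i + 1) + (j:ℝ))
      = ∏ j ∈ Finset.range (n - i), (k + (i:ℝ) + 1 + (j:ℝ)) := by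
    refine Finset.prod_congr rfl fun j _ => by ring
  rw [this]; ring

lemma lag_zero (k x : ℝ) : lag 0 k x = 1 := by
  simp [lag]

lemma lc_self (n : ℕ) (k : ℝ) : lc n n k = (-1)^n / (Nat.factorial n : ℝ) := by
  simp [lc, Pr]

-- L1 : lag (n+1) k x = lag (n+1) (k-1) x + lag n k x
lemma lc_rec (n i : ℕ) (h : i ≤ n) (k : ℝ) :
    lc (n+1) i k = lc (n+1) i (k-1) + lc n i k := by
  have hs : n + 1 - i = (n - i) + 1 := by omega
  rw [lc, lc, lc, hs]
  rw [show k - 1 + (i:ℝ) + 1 = k + (i:ℝ) by ring]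
  generalize n - i = t
  rw [Pr_succ, Pr_succ' (k+(i:ℝ))]
  rw [show k + (i:ℝ) + 1 + (t:ℝ) = (k+(i:ℝ)) + ((t:ℝ)+1) by ring]
  have h1 : ((Nat.factorial (t+1) : ℝ)) = (t+1) * Nat.factorial t := by
    rw [Nat.factorial_succ]; push_cast; ring
  have h2 : (Nat.factorial t : ℝ) ≠ 0 := Nat.cast_ne_zero.2 (Nat.factorial_ne_zero t)
  have h3 : (Nat.factorial i : ℝ) ≠ 0 := Nat.cast_ne_zero.2 (Nat.factorial_ne_zero i)
  have h4 : ((t:ℝ)+1) ≠ 0 := by positivity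
  rw [h1]
  field_simp

lemma lag_L1 (n : ℕ) (k x : ℝ) :
    lag (n+1) k x = lag (n+1) (k-1) x + lag n k x := by
  rw [lag_eq, lag_eq, lag_eq]
  rw [Finset.sum_range_succ, Finset.sum_range_succ (fun i => lc (n+1) i (k-1) * x ^ i)]
  rw [lc_self, lc_self]
  rw [add_right_comm]
  congr 1
  rw [← Finset.sum_add_distrib]
  refine Finset.sum_congr rfl fun i hi => ?_
  rw [lc_rec n i (Nat.lt_succ_iff.1 (Finset.mem_range.1 hi)) k]
  ring

lemma fact_succ_cast (n : ℕ) : (Nat.factorial (n+1) : ℝ) = ((n:ℝ)+1) * Nat.factorial n := by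
  rw [Nat.factorial_succ]; push_cast; ring

lemma fact_ne (n : ℕ) : (Nat.factorial n : ℝ) ≠ 0 := Nat.cast_ne_zero.2 (Nat.factorial_ne_zero n)

lemma lc_A0 (n : ℕ) (k : ℝ) : ((n:ℝ)+1) * lc (n+1) 0 k = ((n:ℝ)+k+1) * lc n 0 k := by
  simp only [lc, Nat.sub_zero, pow_zero, one_mul, Nat.cast_zero, add_zero, Nat.factorial_zero,
    Nat.cast_one, div_one]
  rw [Pr_succ, fact_succ_cast]
  have := fact_ne n
  field_simp
  ring

lemma lc_Atop (n : ℕ) (k : ℝ) :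
    lc n n (k+1) + ((n:ℝ)+1) * lc (n+1) (n+1) k = 0 := by
  rw [lc_self, lc_self, fact_succ_cast, pow_succ]
  have := fact_ne n
  have h4 : ((n:ℝ)+1) ≠ 0 := by positivity
  field_simp
  ring

lemma lc_Amid (n i : ℕ) (h : i < n) (k : ℝ) :
    lc n i (k+1) + ((n:ℝ)+1) * lc (n+1) (i+1) k = ((n:ℝ)+k+1) * lc n (i+1) k := by
  have h1 : n - i = (n - (i+1)) + 1 := by omega
  have h2 : n + 1 - (i+1) = (n - (i+1)) + 1 := by omega
  have ht : ((n - (i+1) : ℕ) : ℝ) = (n:ℝ) - i - 1 := by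
    have : ((n - (i+1) : ℕ) : ℝ) = (n:ℝ) - ((i:ℝ)+1) := by
      rw [Nat.cast_sub h]; push_cast; ring
    rw [this]; ring
  rw [lc, lc, lc, h1, h2]
  generalize hgen : n - (i+1) = t
  rw [hgen] at ht
  push_cast
  rw [show k + 1 + (i:ℝ) + 1 = k + (i:ℝ) + 2 by ring,
      show k + ((i:ℝ) + 1) + 1 = k + (i:ℝ) + 2 by ring]
  have hn : (n:ℝ) = (t:ℝ) + (i:ℝ) + 1 := by rw [ht]; ring
  rw [Pr_succ, hn, fact_succ_cast t, fact_succ_cast i, pow_succ]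
  have := fact_ne t
  have := fact_ne i
  have h4 : ((t:ℝ)+1) ≠ 0 := by positivity
  have h5 : ((i:ℝ)+1) ≠ 0 := by positivity
  field_simp
  ring

lemma lag_A (n : ℕ) (k x : ℝ) :
    ((n:ℝ)+1) * lag (n+1) k x = ((n:ℝ)+k+1) * lag n k x - x * lag n (k+1) x := by
  rw [lag_eq, lag_eq, lag_eq, eq_sub_iff_add_eq, Finset.mul_sum, Finset.mul_sum, Finset.mul_sum]
  rw [Finset.sum_range_succ' (fun i => ((n:ℝ)+1) * (lc (n+1) i k * x ^ i)) (n+1)]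
  have hx2 : ∑ i ∈ Finset.range (n+1), x * (lc n i (k+1) * x ^ i)
      = ∑ i ∈ Finset.range (n+1), lc n i (k+1) * x ^ (i+1) := by
    refine Finset.sum_congr rfl fun i _ => by ring
  rw [hx2]
  rw [Finset.sum_range_succ' (fun i => ((n:ℝ)+k+1) * (lc n i k * x ^ i)) n]
  rw [add_right_comm, ← Finset.sum_add_distrib]
  rw [Finset.sum_range_succ (fun i => ((n:ℝ)+1) * (lc (n+1) (i+1) k * x ^ (i+1))
      + lc n i (k+1) * x ^ (i+1)) n]
  have htop : ((n:ℝ)+1) * (lc (n+1) (n+1) k * x ^ (n+1)) + lc n n (k+1) * x ^ (n+1) = 0 := by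
    have := lc_Atop n k
    linear_combination x ^ (n+1) * this
  rw [htop, add_zero]
  congr 1
  · refine Finset.sum_congr rfl fun i hi => ?_
    have hi' : i < n := Finset.mem_range.1 hi
    have := lc_Amid n i hi' k
    linear_combination x ^ (i+1) * this
  · simpa using lc_A0 n k

lemma lc_D (n i : ℕ) (h : i ≤ n) (k : ℝ) :
    ((i:ℝ)+1) * lc (n+1) (i+1) k = -(lc n i (k+1)) := by
  have h2 : n + 1 - (i+1) = n - i := by omega
  rw [lc, lc, h2]
  push_cast
  rw [show k + ((i:ℝ)+1) + 1 = k + 1 + (i:ℝ) + 1 by ring]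
  rw [fact_succ_cast i, pow_succ]
  have := fact_ne i
  have := fact_ne (n-i)
  have h5 : ((i:ℝ)+1) ≠ 0 := by positivity
  field_simp

lemma lag_hasDerivAt (n : ℕ) (k x : ℝ) :
    HasDerivAt (fun y => lag (n+1) k y) (-(lag n (k+1) x)) x := by
  have hsum : HasDerivAt (fun y => ∑ i ∈ Finset.range (n+2), lc (n+1) i k * y ^ i)
      (∑ i ∈ Finset.range (n+2), lc (n+1) i k * ((i:ℝ) * x ^ (i-1))) x := by
    refine HasDerivAt.fun_sum fun i _ => ?_
    exact (hasDerivAt_pow i x).const_mul _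
  have heq : (fun y => lag (n+1) k y) = fun y => ∑ i ∈ Finset.range (n+2), lc (n+1) i k * y ^ i := by
    funext y; exact lag_eq (n+1) k y
  rw [heq]
  convert hsum using 1
  rw [lag_eq, Finset.sum_range_succ' (fun i => lc (n+1) i k * ((i:ℝ) * x ^ (i-1))) (n+1)]
  simp only [Nat.cast_zero, zero_mul, mul_zero, add_zero, Nat.cast_ofNat, Nat.add_sub_cancel]
  rw [neg_eq_iff_eq_neg, ← Finset.sum_neg_distrib]
  refine Finset.sum_congr rfl fun i hi => ?_
  have hi' : i ≤ n := Nat.lt_succ_iff.1 (Finset.mem_range.1 hi)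
  have := lc_D n i hi' k
  push_cast
  linear_combination x ^ i * this

lemma lag_one (k x : ℝ) : lag 1 k x = k + 1 - x := by
  norm_num [lag, Finset.sum_range_succ, Pr]
  ring

lemma lag_theta (m : ℕ) (k y : ℝ) :
    -y * lag m (k+1) y + (k - y) * lag (m+1) k y = ((m:ℝ)+2) * lag (m+2) (k-1) y := by
  have h1 := lag_L1 m (k+1) y
  rw [show k+1-1 = k by ring] at h1
  have h2 := lag_A (m+1) k y
  have h3 := lag_L1 (m+1) k y
  push_cast at h2
  linear_combination y * h1 - h2 + ((m:ℝ)+2) * h3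

open MeasureTheory Real Set Filter

lemma lag_continuous (n : ℕ) (k : ℝ) : Continuous fun x => lag n k x := by
  have : (fun x => lag n k x) = fun x => ∑ i ∈ Finset.range (n+1), lc n i k * x ^ i :=
    funext fun x => lag_eq n k x
  rw [this]
  exact continuous_finset_sum _ fun i _ => continuous_const.mul (continuous_pow i)

lemma integrableOn_rpow_exp {β : ℝ} (hβ : -1 < β) :
    IntegrableOn (fun x => x ^ β * Real.exp (-x)) (Set.Ioi (0:ℝ)) := by
  have h := Real.GammaIntegral_convergent (show (0:ℝ) < β + 1 by linarith)
  have : (fun x : ℝ => Real.exp (-x) * x ^ (β + 1 - 1)) = fun x => x ^ β * Real.exp (-x) := by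
    funext x; rw [add_sub_cancel_right, mul_comm]
  rwa [this] at h

lemma integrableOn_pms (t N : ℕ) (coef : ℕ → ℝ) {β : ℝ} (hβ : -1 < β) :
    IntegrableOn (fun x => x ^ t * (∑ i ∈ Finset.range N, coef i * x ^ i) * x ^ β * Real.exp (-x))
      (Set.Ioi (0:ℝ)) := by
  have h : IntegrableOn
      (fun x => ∑ i ∈ Finset.range N, coef i * (x ^ (β + (t + i : ℕ)) * Real.exp (-x)))
      (Set.Ioi (0:ℝ)) :=
    integrable_finset_sum _ fun i _ =>
      ((integrableOn_rpow_exp (show -1 < β + ((t + i : ℕ):ℝ) by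
        have := Nat.cast_nonneg (α := ℝ) (t+i); linarith)).const_mul _)
  refine h.congr_fun (fun x hx => ?_) measurableSet_Ioi
  have hx0 : (0:ℝ) < x := hx
  rw [Finset.mul_sum, Finset.sum_mul, Finset.sum_mul]
  refine Finset.sum_congr rfl fun i _ => ?_
  rw [Real.rpow_add hx0, Real.rpow_natCast]
  push_cast
  rw [pow_add]
  ring

lemma integral_pow_rpow_exp (t : ℕ) {β : ℝ} (hβ : -1 < β) :
    ∫ x in Set.Ioi (0:ℝ), x ^ t * x ^ β * Real.exp (-x) = Real.Gamma (β + t + 1) := by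
  rw [Real.Gamma_eq_integral (show (0:ℝ) < β + t + 1 by
    have := Nat.cast_nonneg (α := ℝ) t; linarith)]
  refine setIntegral_congr_fun measurableSet_Ioi fun x hx => ?_
  have hx0 : (0:ℝ) < x := hx
  rw [show β + (t:ℝ) + 1 - 1 = β + t by ring, Real.rpow_add hx0, Real.rpow_natCast]
  ring

lemma tendsto_pms (t N : ℕ) (coef : ℕ → ℝ) (β : ℝ) :
    Tendsto (fun x => x ^ t * (∑ i ∈ Finset.range N, coef i * x ^ i) * x ^ β * Real.exp (-x))
      atTop (nhds 0) := by
  have h : Tendsto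
      (fun x : ℝ => ∑ i ∈ Finset.range N, coef i * (x ^ (β + (t + i : ℕ)) * Real.exp (-x)))
      atTop (nhds (∑ i ∈ Finset.range N, (0:ℝ))) := by
    refine tendsto_finset_sum _ fun i _ => ?_
    have h2 := (tendsto_rpow_mul_exp_neg_mul_atTop_nhds_zero (β + (t + i : ℕ)) 1 one_pos).const_mul (coef i)
    simp only [neg_mul, one_mul, mul_zero] at h2
    exact h2
  rw [Finset.sum_const, smul_zero] at h
  refine Tendsto.congr' ?_ h
  filter_upwards [eventually_gt_atTop (0:ℝ)] with x hx0
  rw [Finset.mul_sum, Finset.sum_mul, Finset.sum_mul]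
  refine Finset.sum_congr rfl fun i _ => ?_
  rw [Real.rpow_add hx0, Real.rpow_natCast]
  push_cast
  rw [pow_add]
  ring

lemma ftc0 (f f' : ℝ → ℝ) (hc : ContinuousWithinAt f (Set.Ici 0) 0)
    (hd : ∀ x ∈ Set.Ioi (0:ℝ), HasDerivAt f (f' x) x)
    (hi : IntegrableOn f' (Set.Ioi (0:ℝ)))
    (ht : Tendsto f atTop (nhds 0)) :
    ∫ x in Set.Ioi (0:ℝ), f' x = - f 0 := by
  have := integral_Ioi_of_hasDerivAt_of_tendsto hc hd hi ht
  rw [this]; ring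

lemma lag_rodriguesS (j : ℕ) (α x : ℝ) :
    (α+1) * lag (j+1) (α+1) x - x * lag (j+1) (α+1) x - x * lag j (α+2) x
      = ((j:ℝ)+2) * lag (j+2) α x := by
  have hA1 := lag_A (j+1) α x
  have hA2 := lag_A j (α+1) x
  have hL := lag_L1 j (α+1) x
  rw [show α+1-1 = α by ring] at hL
  rw [show α+1+1 = α + 2 by ring] at hA2
  push_cast at hA1
  linear_combination (-1) * hA1 - hA2 + ((j:ℝ)+α+2) * hL

-- derivative of lag j β at x, valid for all j with junk value 0 for j = 0
noncomputable def lagD (j : ℕ) (β x : ℝ) : ℝ :=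
  match j with
  | 0 => 0
  | j+1 => -(lag j (β+1) x)

lemma lag_hasDerivAt' (j : ℕ) (β x : ℝ) :
    HasDerivAt (fun y => lag j β y) (lagD j β x) x := by
  cases j with
  | zero =>
    have : (fun y => lag 0 β y) = fun _ => (1:ℝ) := funext fun y => lag_zero β y
    rw [this, lagD]
    exact hasDerivAt_const x 1
  | succ j => exact lag_hasDerivAt j β x

lemma lag_rodrigues_all (j : ℕ) (α x : ℝ) :
    (α+1) * lag j (α+1) x - x * lag j (α+1) x + x * lagD j (α+1) x
      = ((j:ℝ)+1) * lag (j+1) α x := by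
  cases j with
  | zero =>
    simp only [lagD, lag_zero, mul_one, mul_zero, Nat.cast_zero]
    norm_num [lag_one]
    try ring
  | succ j =>
    simp only [lagD]
    have := lag_rodriguesS j α x
    push_cast
    rw [show α+1+1 = α+2 by ring]
    linear_combination this

lemma G_hasDerivAt (j : ℕ) (α : ℝ) {x : ℝ} (hx : 0 < x) :
    HasDerivAt (fun y => y ^ (α+1) * Real.exp (-y) * lag j (α+1) y)
      (((j:ℝ)+1) * (x ^ α * Real.exp (-x) * lag (j+1) α x)) x := by
  have h1 : HasDerivAt (fun y : ℝ => y ^ (α+1)) ((α+1) * x ^ α) x := by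
    have := Real.hasDerivAt_rpow_const (x := x) (p := α+1) (Or.inl hx.ne')
    rwa [show α+1-1 = α by ring] at this
  have h2 : HasDerivAt (fun y : ℝ => Real.exp (-y)) (-Real.exp (-x)) x := by
    have := (hasDerivAt_neg x).exp
    simpa using this
  have h3 := lag_hasDerivAt' j (α+1) x
  have hprod := (h1.fun_mul h2).fun_mul h3
  refine hprod.congr_deriv (Eq.symm ?_)
  have hrw : x ^ (α+1) = x ^ α * x := Real.rpow_add_one hx.ne' α
  have hkey := lag_rodrigues_all j α x
  rw [hrw]
  linear_combination (-(x ^ α * Real.exp (-x))) * hkey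

lemma integrableOn_pow_lag (s N : ℕ) (κ : ℝ) {β : ℝ} (hβ : -1 < β) :
    IntegrableOn (fun x => x ^ s * lag N κ x * (x ^ β * Real.exp (-x))) (Set.Ioi (0:ℝ)) := by
  have h := integrableOn_pms s (N+1) (fun i => lc N i κ) hβ
  refine h.congr_fun (fun x _ => ?_) measurableSet_Ioi
  beta_reduce; rw [← lag_eq]; ring

lemma tendsto_pow_lag (s N : ℕ) (κ β : ℝ) :
    Tendsto (fun x => x ^ s * lag N κ x * (x ^ β * Real.exp (-x))) atTop (nhds 0) := by
  have h := tendsto_pms s (N+1) (fun i => lc N i κ) β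
  refine h.congr fun x => ?_
  rw [← lag_eq]; ring

lemma contWithin_H (s N : ℕ) (κ : ℝ) {γ : ℝ} (hγ : 0 < γ) :
    ContinuousWithinAt (fun y : ℝ => y ^ s * (y ^ γ * Real.exp (-y) * lag N κ y))
      (Set.Ici 0) 0 := by
  have h1 : ContinuousAt (fun y : ℝ => y ^ γ) 0 :=
    Real.continuousAt_rpow_const 0 γ (Or.inr hγ.le)
  exact ((continuous_pow s).continuousAt.mul
    ((h1.mul ((Real.continuous_exp.comp continuous_neg).continuousAt)).mul
      (lag_continuous N κ).continuousAt)).continuousWithinAt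

lemma lag_moment (j : ℕ) : ∀ (α : ℝ), -1 < α → ∀ t : ℕ, t ≤ j →
    ∫ x in Set.Ioi (0:ℝ), x ^ t * lag j α x * (x ^ α * Real.exp (-x))
      = if t = j then (-1)^j * Real.Gamma (α + j + 1) else 0 := by
  induction j with
  | zero =>
    intro α hα t ht
    simp only [Nat.le_zero] at ht; subst ht
    rw [if_pos rfl]
    have h := integral_pow_rpow_exp 0 hα
    have heq : ∀ x ∈ Set.Ioi (0:ℝ),
        x ^ (0:ℕ) * lag 0 α x * (x ^ α * Real.exp (-x)) = x ^ (0:ℕ) * x ^ α * Real.exp (-x) := by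
      intro x _; rw [lag_zero]; ring
    rw [setIntegral_congr_fun measurableSet_Ioi heq, h]
    norm_num
  | succ j ih =>
    intro α hα t ht
    have hα1 : -1 < α + 1 := by linarith
    -- FTC step
    have hd : ∀ x ∈ Set.Ioi (0:ℝ),
        HasDerivAt (fun y : ℝ => y ^ t * (y ^ (α+1) * Real.exp (-y) * lag j (α+1) y))
          ((t:ℝ) * (x ^ (t-1) * lag j (α+1) x * (x ^ (α+1) * Real.exp (-x)))
            + ((j:ℝ)+1) * (x ^ t * lag (j+1) α x * (x ^ α * Real.exp (-x)))) x := by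
      intro x hx
      have h := (hasDerivAt_pow t x).fun_mul (G_hasDerivAt j α hx)
      refine h.congr_deriv (Eq.symm ?_)
      ring
    have hiA : IntegrableOn
        (fun x => (t:ℝ) * (x ^ (t-1) * lag j (α+1) x * (x ^ (α+1) * Real.exp (-x))))
        (Set.Ioi (0:ℝ)) := (integrableOn_pow_lag (t-1) j (α+1) hα1).const_mul _
    have hiB : IntegrableOn
        (fun x => ((j:ℝ)+1) * (x ^ t * lag (j+1) α x * (x ^ α * Real.exp (-x))))
        (Set.Ioi (0:ℝ)) := (integrableOn_pow_lag t (j+1) α hα).const_mul _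
    have htend : Tendsto (fun y : ℝ => y ^ t * (y ^ (α+1) * Real.exp (-y) * lag j (α+1) y))
        atTop (nhds 0) := by
      have h := tendsto_pow_lag t j (α+1) (α+1)
      refine h.congr fun x => ?_
      ring
    have hzero := ftc0 _ _ (contWithin_H t j (α+1) (by linarith)) hd (hiA.add hiB) htend
    have hH0 : (fun y : ℝ => y ^ t * (y ^ (α+1) * Real.exp (-y) * lag j (α+1) y)) 0 = 0 := by
      simp only
      rw [Real.zero_rpow (by linarith : α + 1 ≠ 0)]
      ring
    rw [show -((0:ℝ) ^ t * ((0:ℝ) ^ (α+1) * Real.exp (-0) * lag j (α+1) 0)) = 0 by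
      rw [Real.zero_rpow (by linarith : α + 1 ≠ 0)]; ring] at hzero
    rw [integral_add hiA hiB, integral_const_mul, integral_const_mul] at hzero
    -- hzero : t * ∫A + (j+1) * ∫B = 0
    have hj1 : ((j:ℝ)+1) ≠ 0 := by positivity
    rcases Nat.eq_zero_or_pos t with rfl | htpos
    · -- t = 0
      rw [if_neg (by omega)]
      have : ((j:ℝ)+1) * ∫ x in Set.Ioi (0:ℝ), x ^ (0:ℕ) * lag (j+1) α x * (x ^ α * Real.exp (-x)) = 0 := by
        push_cast at hzero
        linarith [hzero]
      exact (mul_eq_zero.mp this).resolve_left hj1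
    · obtain ⟨s, rfl⟩ : ∃ s, t = s + 1 := ⟨t - 1, by omega⟩
      have hs : s ≤ j := by omega
      have hihs := ih (α+1) hα1 s hs
      rw [show s + 1 - 1 = s by omega] at hzero
      rw [hihs] at hzero
      -- hzero : (s+1) * (if s = j then ...) + (j+1) * ∫B = 0
      by_cases hsj : s = j
      · subst hsj
        rw [if_pos rfl] at hzero
        rw [if_pos rfl]
        have : (∫ x in Set.Ioi (0:ℝ), x ^ (s+1) * lag (s+1) α x * (x ^ α * Real.exp (-x)))
            = -(((s:ℝ)+1) * ((-1)^s * Real.Gamma (α + 1 + s + 1))) / ((s:ℝ)+1) := by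
          push_cast at hzero ⊢
          rw [eq_div_iff (by positivity)]
          linarith [hzero]
        rw [this]
        push_cast
        rw [pow_succ]
        have : α + 1 + (s:ℝ) + 1 = α + ((s:ℝ)+1) + 1 := by ring
        rw [this]
        field_simp
      · rw [if_neg hsj] at hzero
        rw [if_neg (by omega)]
        have : ((j:ℝ)+1) * ∫ x in Set.Ioi (0:ℝ), x ^ (s+1) * lag (j+1) α x * (x ^ α * Real.exp (-x)) = 0 := by
          push_cast at hzero
          linarith [hzero]
        exact (mul_eq_zero.mp this).resolve_left hj1

lemma lag_norm (j : ℕ) {α : ℝ} (hα : -1 < α) :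
    ∫ x in Set.Ioi (0:ℝ), lag j α x * lag j α x * (x ^ α * Real.exp (-x))
      = Real.Gamma (α + j + 1) / (Nat.factorial j : ℝ) := by
  have heq : ∀ x ∈ Set.Ioi (0:ℝ),
      lag j α x * lag j α x * (x ^ α * Real.exp (-x))
        = ∑ i ∈ Finset.range (j+1), lc j i α * (x ^ i * lag j α x * (x ^ α * Real.exp (-x))) := by
    intro x _
    rw [show lag j α x * lag j α x * (x ^ α * Real.exp (-x))
        = (∑ i ∈ Finset.range (j+1), lc j i α * x ^ i) * (lag j α x * (x ^ α * Real.exp (-x)))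
        by rw [← lag_eq]; ring]
    rw [Finset.sum_mul]
    exact Finset.sum_congr rfl fun i _ => by ring
  rw [setIntegral_congr_fun measurableSet_Ioi heq]
  rw [integral_finset_sum _ fun i _ => ((integrableOn_pow_lag i j α hα).const_mul _)]
  have hval : ∀ i ∈ Finset.range (j+1),
      (∫ x in Set.Ioi (0:ℝ), lc j i α * (x ^ i * lag j α x * (x ^ α * Real.exp (-x))))
        = lc j i α * (if i = j then (-1)^j * Real.Gamma (α + j + 1) else 0) := by
    intro i hi
    rw [integral_const_mul, lag_moment j α hα i (Nat.lt_succ_iff.1 (Finset.mem_range.1 hi))]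
  rw [Finset.sum_congr rfl hval]
  rw [Finset.sum_eq_single j]
  · rw [if_pos rfl, lc_self]
    have hneg : ((-1:ℝ))^j * (-1)^j = 1 := by
      rw [← pow_add, ← two_mul, pow_mul]; norm_num
    field_simp [fact_ne j]
    linear_combination Real.Gamma (α + ↑j + 1) * hneg
  · intro i _ hij
    rw [if_neg hij, mul_zero]
  · intro h
    exact absurd (Finset.self_mem_range_succ j) h

/-! ### theta polynomial and exceptional machinery -/

noncomputable def thp (m : ℕ) (k y : ℝ) : ℝ := match m with | 0 => 0 | (m+1) => lag m k y

noncomputable def thD (m : ℕ) (k x : ℝ) : ℝ := match m with | 0 => 0 | (m+1) => -(lagD m k (-x))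

lemma thp_continuous (m : ℕ) (k : ℝ) : Continuous fun y => thp m k y := by
  cases m with
  | zero => simpa [thp] using continuous_const (y := (0:ℝ))
  | succ m => simpa [thp] using lag_continuous m k

lemma thp_hasDerivAt (m : ℕ) (k x : ℝ) :
    HasDerivAt (fun y => thp m k (-y)) (thD m k x) x := by
  cases m with
  | zero =>
    simp only [thp, thD]
    exact hasDerivAt_const x 0
  | succ m =>
    have h := (lag_hasDerivAt' m k (-x)).comp x (hasDerivAt_neg x)
    simp only [thp, thD]
    refine h.congr_deriv (Eq.symm ?_)
    ring

lemma xi_hasDerivAt (m : ℕ) (k x : ℝ) :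
    HasDerivAt (fun y => lag m (k-1) (-y)) (thp m k (-x)) x := by
  cases m with
  | zero =>
    have : (fun y : ℝ => lag 0 (k-1) (-y)) = fun _ => (1:ℝ) := funext fun y => lag_zero _ _
    rw [this]
    simpa [thp] using hasDerivAt_const x (1:ℝ)
  | succ m =>
    have h := (lag_hasDerivAt' (m+1) (k-1) (-x)).comp x (hasDerivAt_neg x)
    simp only [thp, lagD] at h ⊢
    refine h.congr_deriv (Eq.symm ?_)
    rw [show k-1+1 = k by ring]
    ring

lemma lagD_eq_neg_thp (N : ℕ) (k x : ℝ) : lagD N (k-1) x = -(thp N k x) := by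
  cases N with
  | zero => simp [lagD, thp]
  | succ N => simp only [lagD, thp]; rw [show k-1+1 = k by ring]

lemma lag_split (m : ℕ) (k y : ℝ) : lag m k y = lag m (k-1) y + thp m k y := by
  cases m with
  | zero => simp [lag_zero, thp]
  | succ m => simpa [thp] using lag_L1 m k y

lemma thp_theta (m : ℕ) (k x : ℝ) :
    x * thD m k x + (k + x) * thp m k (-x) = (m:ℝ) * lag m (k-1) (-x) := by
  match m with
  | 0 => simp [thD, thp]
  | 1 =>
    simp only [thD, thp, lagD, lag_zero, lag_one]
    norm_num
  | (m+2) =>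
    simp only [thD, thp, lagD, neg_neg]
    have h := lag_theta m k (-x)
    push_cast
    linear_combination h

/-! ### polynomial representation -/

noncomputable def lagP (n : ℕ) (k : ℝ) : Polynomial ℝ :=
  ∑ i ∈ Finset.range (n+1), Polynomial.C (lc n i k) * Polynomial.X ^ i

lemma lagP_eval (n : ℕ) (k x : ℝ) : (lagP n k).eval x = lag n k x := by
  rw [lag_eq, lagP]
  simp [Polynomial.eval_finset_sum]

noncomputable def thpP (m : ℕ) (k : ℝ) : Polynomial ℝ :=
  match m with | 0 => 0 | (m+1) => lagP m k

lemma thpP_eval (m : ℕ) (k x : ℝ) : (thpP m k).eval x = thp m k x := by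
  cases m with
  | zero => simp [thpP, thp]
  | succ m => simp [thpP, thp, lagP_eval]

lemma integrableOn_polyeval (P : Polynomial ℝ) {β : ℝ} (hβ : -1 < β) :
    IntegrableOn (fun x => P.eval x * x ^ β * Real.exp (-x)) (Set.Ioi (0:ℝ)) := by
  have h := integrableOn_pms 0 (P.natDegree + 1) (fun i => P.coeff i) hβ
  refine h.congr_fun (fun x _ => ?_) measurableSet_Ioi
  rw [Polynomial.eval_eq_sum_range]
  ring

lemma tendsto_polyeval (P : Polynomial ℝ) (β : ℝ) :
    Tendsto (fun x => P.eval x * x ^ β * Real.exp (-x)) atTop (nhds 0) := by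
  have h := tendsto_pms 0 (P.natDegree + 1) (fun i => P.coeff i) β
  refine h.congr fun x => ?_
  rw [Polynomial.eval_eq_sum_range]
  ring

/-! ### positivity of xi -/

lemma Pr_pos {a : ℝ} (ha : 0 < a) (t : ℕ) : 0 < Pr a t :=
  Finset.prod_pos fun j _ => add_pos_of_pos_of_nonneg ha (Nat.cast_nonneg j)

lemma lag_neg_eq (m : ℕ) (k x : ℝ) :
    lag m (k-1) (-x) = ∑ i ∈ Finset.range (m+1),
      Pr (k+i) (m-i) / ((Nat.factorial (m-i) : ℝ) * (Nat.factorial i)) * x ^ i := by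
  rw [lag_eq]
  refine Finset.sum_congr rfl fun i _ => ?_
  rw [lc, show k - 1 + (i:ℝ) + 1 = k + i by ring, neg_pow]
  have hneg : ((-1:ℝ))^i * (-1)^i = 1 := by rw [← pow_add, ← two_mul, pow_mul]; norm_num
  have h2 := fact_ne (m-i)
  have h3 := fact_ne i
  field_simp
  linear_combination (Pr (k+(i:ℝ)) (m-i) * x ^ i) * hneg

lemma xi_lower {k : ℝ} (hk : 0 < k) (m : ℕ) {x : ℝ} (hx : 0 ≤ x) :
    Pr k m / (Nat.factorial m : ℝ) ≤ lag m (k-1) (-x) := by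
  rw [lag_neg_eq]
  have h0 : Pr (k+(0:ℕ)) (m-0) / ((Nat.factorial (m-0) : ℝ) * (Nat.factorial 0)) * x ^ (0:ℕ)
      = Pr k m / (Nat.factorial m : ℝ) := by norm_num
  rw [← h0]
  refine Finset.single_le_sum
    (f := fun (i : ℕ) => Pr (k+(i:ℝ)) (m-i) / ((Nat.factorial (m-i) : ℝ) * (Nat.factorial i)) * x ^ i)
    (fun i _ => ?_) (Finset.mem_range.2 (Nat.succ_pos m))
  have hPr : 0 < Pr (k+(i:ℝ)) (m-i) :=
    Pr_pos (add_pos_of_pos_of_nonneg hk (Nat.cast_nonneg i)) _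
  have h2 : (0:ℝ) < (Nat.factorial (m-i) : ℝ) * (Nat.factorial i) := by
    have := Nat.factorial_pos (m-i); have := Nat.factorial_pos i; positivity
  positivity

lemma xi_pos {k : ℝ} (hk : 0 < k) (m : ℕ) {x : ℝ} (hx : 0 ≤ x) :
    0 < lag m (k-1) (-x) := by
  refine lt_of_lt_of_le ?_ (xi_lower hk m hx)
  have := Pr_pos hk m
  have := fact_ne m
  positivity

/-! ### the key derivative identity -/

lemma main_hasDeriv {k : ℝ} (hk : 0 < k) (m N : ℕ) {x : ℝ} (hx : 0 < x) :
    HasDerivAt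
      (fun y => -(thp m k (-y)) * (lag N (k-1) y)^2 * y ^ k * Real.exp (-y) / lag m (k-1) (-y))
      ((lag m k (-x) * lag N (k-1) x + lag m (k-1) (-x) * thp N k x) ^ 2
          * (x ^ k * Real.exp (-x) / (lag m (k-1) (-x))^2)
        - (lag N k x)^2 * (x ^ k * Real.exp (-x))
        - (m:ℝ) * ((lag N (k-1) x)^2 * (x ^ (k-1) * Real.exp (-x)))) x := by
  have hξ := xi_pos hk m hx.le
  have hθ := (thp_hasDerivAt m k x).neg
  have hA := lag_hasDerivAt' N (k-1) x
  have hA2 : HasDerivAt (fun y => (lag N (k-1) y)^2)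
      (2 * lag N (k-1) x * lagD N (k-1) x) x := by
    have h := hA.mul hA
    have hsq : (fun y => (lag N (k-1) y)^2) = fun y => lag N (k-1) y * lag N (k-1) y :=
      funext fun y => by ring
    rw [hsq]
    refine h.congr_deriv (Eq.symm ?_)
    ring
  have hP : HasDerivAt (fun y : ℝ => y ^ k) (k * x ^ (k-1)) x :=
    Real.hasDerivAt_rpow_const (Or.inl hx.ne')
  have hE : HasDerivAt (fun y : ℝ => Real.exp (-y)) (-Real.exp (-x)) x := by
    simpa using (hasDerivAt_neg x).exp
  have hV := xi_hasDerivAt m k x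
  have h := (((hθ.fun_mul hA2).fun_mul hP).fun_mul hE).fun_div hV (ne_of_gt hξ)
  refine h.congr_deriv (Eq.symm ?_)
  simp only [Pi.neg_apply]
  have hd : thD m k x = ((m:ℝ) * lag m (k-1) (-x) - (k + x) * thp m k (-x)) / x := by
    rw [eq_div_iff hx.ne']
    linarith [thp_theta m k x]
  have hP2 : x ^ k = x ^ (k-1) * x := by
    rw [← Real.rpow_add_one hx.ne' (k-1), show k-1+1 = k by ring]
  rw [lag_split m k (-x), lag_split N k x, lagD_eq_neg_thp, hd, hP2]
  field_simp
  ring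

lemma lagZ_eq_thp {m n : ℕ} (hnm : m ≤ n) (k x : ℝ) :
    lagZ ((n : ℤ) - (m : ℤ) - 1) k x = thp (n - m) k x := by
  have hz : (n : ℤ) - (m : ℤ) - 1 = ((n - m : ℕ) : ℤ) - 1 := by omega
  rw [hz]
  cases h : n - m with
  | zero => simp [lagZ, thp]
  | succ N =>
    have h1 : ((N+1 : ℕ) : ℤ) - 1 = (N : ℤ) := by omega
    rw [h1]
    simp [lagZ, thp]

open MeasureTheory

/-- L² norm of the type I exceptional Laguerre polynomials. -/
theorem XLaguerreI_norm (k : ℝ) (hk : 0 < k) (m n : ℕ) (hnm : m ≤ n) :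
    ∫ x in Set.Ioi (0 : ℝ),
      (xi k m x * lag (n - m) (k - 1) x +
        xi (k - 1) m x * lagZ ((n : ℤ) - (m : ℤ) - 1) k x) ^ 2 *
        (Real.rpow x k * Real.exp (-x) / (xi (k - 1) m x) ^ 2)
      = (k + (n : ℝ)) * Real.Gamma (k + (n : ℝ) - (m : ℝ)) / (Nat.factorial (n - m) : ℝ) := by
  have hk' : (-1:ℝ) < k := by linarith
  have hk1 : (-1:ℝ) < k - 1 := by linarith
  set N := n - m with hN
  set c0 : ℝ := Pr k m / (Nat.factorial m : ℝ) with hc0def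
  have hc0 : 0 < c0 := by
    have := Pr_pos hk m
    have := Nat.factorial_pos m
    positivity
  -- function abbreviations
  set Ig : ℝ → ℝ := fun x => (lag m k (-x) * lag N (k-1) x + lag m (k-1) (-x) * thp N k x) ^ 2
      * (x ^ k * Real.exp (-x) / (lag m (k-1) (-x))^2) with hIgdef
  set T1 : ℝ → ℝ := fun x => (lag N k x)^2 * (x ^ k * Real.exp (-x)) with hT1def
  set T2 : ℝ → ℝ := fun x => (m:ℝ) * ((lag N (k-1) x)^2 * (x ^ (k-1) * Real.exp (-x))) with hT2def
  set F : ℝ → ℝ := fun y =>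
      -(thp m k (-y)) * (lag N (k-1) y)^2 * y ^ k * Real.exp (-y) / lag m (k-1) (-y) with hFdef
  -- continuity facts
  have cξ : Continuous fun y : ℝ => lag m (k-1) (-y) := (lag_continuous m (k-1)).comp continuous_neg
  have cSQf : Continuous fun x : ℝ =>
      lag m k (-x) * lag N (k-1) x + lag m (k-1) (-x) * thp N k x :=
    ((((lag_continuous m k).comp continuous_neg).mul (lag_continuous N (k-1))).add
      (cξ.mul ((thp_continuous N k))))
  -- step 1: rewrite the integrand
  have hstep1 : (∫ x in Set.Ioi (0 : ℝ),
      (xi k m x * lag N (k - 1) x +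
        xi (k - 1) m x * lagZ ((n : ℤ) - (m : ℤ) - 1) k x) ^ 2 *
        (Real.rpow x k * Real.exp (-x) / (xi (k - 1) m x) ^ 2))
      = ∫ x in Set.Ioi (0:ℝ), Ig x := by
    refine setIntegral_congr_fun measurableSet_Ioi fun x _ => ?_
    simp only [xi, hIgdef]
    rw [lagZ_eq_thp hnm, ← hN]
    rfl
  rw [hstep1]
  -- integrability of T1, T2
  have hT1int : IntegrableOn T1 (Set.Ioi (0:ℝ)) := by
    have h := integrableOn_polyeval ((lagP N k)^2) hk'
    refine h.congr_fun (fun x _ => ?_) measurableSet_Ioi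
    simp only [hT1def, Polynomial.eval_pow, lagP_eval]
    ring
  have hT2int : IntegrableOn T2 (Set.Ioi (0:ℝ)) := by
    have h : IntegrableOn
        (fun x => (m:ℝ) * (Polynomial.eval x ((lagP N (k-1))^2) * x ^ (k-1) * Real.exp (-x)))
        (Set.Ioi (0:ℝ)) := (integrableOn_polyeval ((lagP N (k-1))^2) hk1).const_mul (m:ℝ)
    refine h.congr_fun (fun x _ => ?_) measurableSet_Ioi
    simp only [hT2def, Polynomial.eval_pow, lagP_eval]
    ring
  -- the combined polynomial
  set SQ : Polynomial ℝ := (lagP m k).comp (-Polynomial.X) * lagP N (k-1)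
      + (lagP m (k-1)).comp (-Polynomial.X) * thpP N k with hSQdef
  have hSQ : ∀ x : ℝ, SQ.eval x
      = lag m k (-x) * lag N (k-1) x + lag m (k-1) (-x) * thp N k x := by
    intro x
    simp [hSQdef, Polynomial.eval_comp, lagP_eval, thpP_eval]
  -- integrability of Ig
  have hIgcont : ContinuousOn Ig (Set.Ioi (0:ℝ)) := by
    have hrp : ContinuousOn (fun x : ℝ => x ^ k) (Set.Ioi 0) := fun x hx =>
      (Real.continuousAt_rpow_const x k (Or.inl (ne_of_gt hx))).continuousWithinAt
    refine ((cSQf.pow 2).continuousOn.mul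
      (((hrp.mul (Real.continuous_exp.comp continuous_neg).continuousOn)).div
        ((cξ.pow 2).continuousOn) fun x hx => ?_))
    exact pow_ne_zero 2 (ne_of_gt (xi_pos hk m (le_of_lt hx)))
  have hIgint : IntegrableOn Ig (Set.Ioi (0:ℝ)) := by
    have hg : IntegrableOn (fun x => (1/c0^2) * (((SQ^2).eval x) * x ^ k * Real.exp (-x)))
        (Set.Ioi (0:ℝ)) := (integrableOn_polyeval (SQ^2) hk').const_mul _
    refine MeasureTheory.Integrable.mono hg (hIgcont.aestronglyMeasurable measurableSet_Ioi) ?_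
    rw [ae_restrict_iff' measurableSet_Ioi]
    refine ae_of_all _ fun x hx => ?_
    have hxpos : (0:ℝ) < x := hx
    have hξ : 0 < lag m (k-1) (-x) := xi_pos hk m hxpos.le
    have hξge : c0 ≤ lag m (k-1) (-x) := xi_lower hk m hxpos.le
    have hrpnn : (0:ℝ) ≤ x ^ k := Real.rpow_nonneg hxpos.le k
    have h2 : c0^2 ≤ (lag m (k-1) (-x))^2 := by nlinarith
    have h3 : 1/(lag m (k-1) (-x))^2 ≤ 1/c0^2 := by
      apply one_div_le_one_div_of_le (by positivity) h2
    have hIgval : Ig x = ((SQ.eval x)^2 * (x ^ k * Real.exp (-x))) * (1/(lag m (k-1) (-x))^2) := by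
      rw [hIgdef, hSQ]
      ring
    have hgval : (1/c0^2) * (((SQ^2).eval x) * x ^ k * Real.exp (-x))
        = ((SQ.eval x)^2 * (x ^ k * Real.exp (-x))) * (1/c0^2) := by
      rw [Polynomial.eval_pow]
      ring
    rw [Real.norm_eq_abs, Real.norm_eq_abs, hIgval, hgval]
    have hnn1 : (0:ℝ) ≤ (SQ.eval x)^2 * (x ^ k * Real.exp (-x)) := by positivity
    rw [abs_of_nonneg (by positivity), abs_of_nonneg (by positivity)]
    exact mul_le_mul_of_nonneg_left h3 hnn1
  -- FTC part
  have hFcont : ContinuousWithinAt F (Set.Ici 0) 0 := by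
    have hrp : ContinuousAt (fun y : ℝ => y ^ k) 0 :=
      Real.continuousAt_rpow_const 0 k (Or.inr hk.le)
    have hnum : Continuous fun y : ℝ => -(thp m k (-y)) * (lag N (k-1) y)^2 :=
      (((thp_continuous m k).comp continuous_neg).neg).mul ((lag_continuous N (k-1)).pow 2)
    have : ContinuousAt F 0 := by
      refine ContinuousAt.div ?_ cξ.continuousAt (ne_of_gt (xi_pos hk m le_rfl))
      exact (hnum.continuousAt.mul hrp).mul (Real.continuous_exp.comp continuous_neg).continuousAt
    exact this.continuousWithinAt
  have hFtend : Tendsto F atTop (nhds 0) := by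
    set RP : Polynomial ℝ := -((thpP m k).comp (-Polynomial.X)) * (lagP N (k-1))^2 with hRPdef
    have hRP : ∀ y : ℝ, RP.eval y = -(thp m k (-y)) * (lag N (k-1) y)^2 := by
      intro y
      simp [hRPdef, Polynomial.eval_comp, lagP_eval, thpP_eval]
    have h1 : Tendsto (fun y : ℝ => RP.eval y * y ^ k * Real.exp (-y)) atTop (nhds 0) :=
      tendsto_polyeval RP k
    have hbd : Filter.IsBoundedUnder (· ≤ ·) atTop
        (norm ∘ fun y : ℝ => (lag m (k-1) (-y))⁻¹) := by
      refine Filter.isBoundedUnder_of_eventually_le (a := c0⁻¹) ?_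
      filter_upwards [eventually_ge_atTop (0:ℝ)] with y hy
      have hξ : 0 < lag m (k-1) (-y) := xi_pos hk m hy
      have hξge : c0 ≤ lag m (k-1) (-y) := xi_lower hk m hy
      simp only [Function.comp_apply, Real.norm_eq_abs, abs_of_pos (inv_pos.2 hξ)]
      rw [← one_div, ← one_div]
      exact one_div_le_one_div_of_le hc0 hξge
    have h2 := h1.zero_mul_isBoundedUnder_le hbd
    refine h2.congr fun y => ?_
    rw [hRP, hFdef]
    ring
  have hΦint : IntegrableOn (fun x => Ig x - T1 x - T2 x) (Set.Ioi (0:ℝ)) :=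
    (hIgint.sub hT1int).sub hT2int
  have hF0 : F 0 = 0 := by
    rw [hFdef]
    simp only
    rw [Real.zero_rpow hk.ne']
    ring
  have hftc : ∫ x in Set.Ioi (0:ℝ), (Ig x - T1 x - T2 x) = 0 := by
    have h0 := ftc0 F (fun x => Ig x - T1 x - T2 x) hFcont
      (fun x hx => by
        have h := main_hasDeriv hk m N (x := x) hx
        rw [hIgdef, hT1def, hT2def, hFdef]
        exact h) hΦint hFtend
    rw [h0, hF0, neg_zero]
  -- split the integral
  have h12 : IntegrableOn (fun x => T1 x + T2 x) (Set.Ioi (0:ℝ)) := hT1int.add hT2int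
  have hsplit : ∫ x in Set.Ioi (0:ℝ), Ig x
      = (∫ x in Set.Ioi (0:ℝ), (Ig x - T1 x - T2 x))
        + ∫ x in Set.Ioi (0:ℝ), (T1 x + T2 x) := by
    rw [← integral_add hΦint h12]
    refine setIntegral_congr_fun measurableSet_Ioi fun x _ => ?_
    ring
  rw [hsplit, hftc, zero_add, integral_add hT1int hT2int]
  -- evaluate the two norms
  have hval1 : ∫ x in Set.Ioi (0:ℝ), T1 x = Real.Gamma (k + N + 1) / (Nat.factorial N : ℝ) := by
    have h := lag_norm N hk'
    rw [← h]
    refine setIntegral_congr_fun measurableSet_Ioi fun x _ => ?_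
    simp only [hT1def]
    ring
  have hval2 : ∫ x in Set.Ioi (0:ℝ), T2 x
      = (m:ℝ) * (Real.Gamma (k + N) / (Nat.factorial N : ℝ)) := by
    have h := lag_norm N hk1
    rw [show k - 1 + (N:ℝ) + 1 = k + N by ring] at h
    rw [hT2def, integral_const_mul, ← h]
    congr 1
    refine setIntegral_congr_fun measurableSet_Ioi fun x _ => ?_
    ring
  rw [hval1, hval2]
  -- final arithmetic
  have hNc : ((N:ℕ):ℝ) = (n:ℝ) - (m:ℝ) := by
    rw [hN, Nat.cast_sub hnm]
  have hGam : Real.Gamma (k + N + 1) = (k + N) * Real.Gamma (k + N) :=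
    Real.Gamma_add_one (by positivity)
  rw [hGam, show k + (n:ℝ) - (m:ℝ) = k + N by rw [hNc]; ring]
  have hfacne := fact_ne N
  field_simp
  ring_nf
  rw [hNc]
  ring
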